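/- Let G be a 2-connected multigraph with a 2-separation (E1,E2) with separating vertices {u,w}. For i = 1,2, let G_i be the graph on vertex set V(E_i) with edges E_i together with a new edge e_i = {u,w}, and let Y_i := Y ∩ E_i. Then for v ∈ {u,w}: v is Y-splittable in G if and only if v is Y_i-splittable in G_i for both i = 1 and i = 2. -/
import Mathlib


/-- A multigraph on vertex type `V` with edge type `E`: each edge has an
unordered pair of endpoints. -/
structure Multigraph (V E : Type) where
  ends : E → Sym2 V

namespace Multigraph

variable {V E : Type}

/-- Adjacency within the subgraph with edge set `F` and vertex set `S`. -/
def Adj (G : Multigraph V E) (F : Set E) (S : Set V) (a b : V) : Prop :=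
  a ∈ S ∧ b ∈ S ∧ ∃ e ∈ F, G.ends e = s(a, b)

/-- Reachability (lying in the same connected component) in the subgraph with
edge set `F` and vertex set `S`. -/
def Reach (G : Multigraph V E) (F : Set E) (S : Set V) : V → V → Prop :=
  Relation.ReflTransGen (G.Adj F S)

/-- `v` is `Y`-splittable: the auxiliary graph `H^v_Y`, whose vertices are the
connected components of `G` minus the edges `Y` and the vertex `v`, with edges
induced by `Y`-edges between components (loops for `Y`-edges within a
component), is bipartite.  This is expressed by a 2-colouring of the vertices
which is constant on the components of `G^v_Y` and proper on `Y`-edges not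
incident to `v`. -/
def Splittable (G : Multigraph V E) (Y : Set E) (v : V) : Prop :=
  ∃ c : V → Bool,
    (∀ a b : V, G.Reach (Set.univ \ Y) {v}ᶜ a b → c a = c b) ∧
    (∀ y ∈ Y, ∀ a b : V, G.ends y = s(a, b) → a ≠ v → b ≠ v → c a ≠ c b)

/-- `T` is a spanning tree of `G`: the subgraph `(V, T)` is connected and
every edge of `T` is a bridge of it. -/
def IsSpanningTree (G : Multigraph V E) (T : Set E) : Prop :=
  (∀ a b : V, G.Reach T Set.univ a b) ∧
  ∀ f ∈ T, ∃ a b : V, ¬ G.Reach (T \ {f}) Set.univ a b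

/-- The set of tree edges lying on the tree path `P_{u,w}(T)` between `u` and
`w`: a tree edge lies on this path iff deleting it separates `u` from `w`. -/
def pathEdges (G : Multigraph V E) (T : Set E) (u w : V) : Set E :=
  {f | f ∈ T ∧ ¬ G.Reach (T \ {f}) Set.univ u w}

/-- The fundamental path `P_e(T)` of an edge `e` (as a set of tree edges). -/
def fundPath (G : Multigraph V E) (T : Set E) (e : E) : Set E :=
  {f | f ∈ T ∧ ∀ a b : V, G.ends e = s(a, b) → ¬ G.Reach (T \ {f}) Set.univ a b}

/-- `v` lies on the tree path between `u` and `w`. -/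
def OnPath (G : Multigraph V E) (T : Set E) (u w v : V) : Prop :=
  v = u ∨ v = w ∨ ¬ G.Reach T {v}ᶜ u w

/-- `v` lies on the fundamental path `P_e(T)` of the edge `e`. -/
def OnFundPath (G : Multigraph V E) (T : Set E) (e : E) (v : V) : Prop :=
  ∀ a b : V, G.ends e = s(a, b) → G.OnPath T a b v

/-- The vertices covered by an edge set `F`. -/
def verts (G : Multigraph V E) (F : Set E) : Set V :=
  {v | ∃ e ∈ F, v ∈ G.ends e}

/-- `P⁻¹_{u,w}(G,T)`: the non-tree edges whose fundamental path contains the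
tree path from `u` to `w`. -/
def Pinv (G : Multigraph V E) (T : Set E) (u w : V) : Set E :=
  {e | e ∉ T ∧ G.pathEdges T u w ⊆ G.fundPath T e}

/-- A multigraph is simple if it has no loops and no parallel edges. -/
def Simple (G : Multigraph V E) : Prop :=
  (∀ e : E, ¬ (G.ends e).IsDiag) ∧ ∀ e f : E, G.ends e = G.ends f → e = f

/-- A `k`-separation: a partition of the edges into two parts, each of size at
least `k`, whose vertex sets share exactly `k` vertices. -/
def IsSep (G : Multigraph V E) (k : ℕ) (E1 E2 : Set E) : Prop :=
  E1 ∪ E2 = Set.univ ∧ Disjoint E1 E2 ∧ k ≤ E1.ncard ∧ k ≤ E2.ncard ∧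
    (G.verts E1 ∩ G.verts E2).ncard = k

/-- Tutte `k`-connectivity: connected and without `ℓ`-separations for
`1 ≤ ℓ < k`. -/
def TutteConnected (G : Multigraph V E) (k : ℕ) : Prop :=
  (∀ a b : V, G.Reach Set.univ Set.univ a b) ∧
  ∀ l : ℕ, 1 ≤ l → l < k → ¬ ∃ E1 E2 : Set E, G.IsSep l E1 E2

/-- A 2-separation with designated separating vertices `u` and `w`. -/
def IsTwoSep (G : Multigraph V E) (E1 E2 : Set E) (u w : V) : Prop :=
  E1 ∪ E2 = Set.univ ∧ Disjoint E1 E2 ∧ 2 ≤ E1.ncard ∧ 2 ≤ E2.ncard ∧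
    u ≠ w ∧ G.verts E1 ∩ G.verts E2 = {u, w}

/-- `v` is an articulation vertex of the subgraph with edge set `F`: after
removing `v` (and its incident edges), some two remaining vertices are
disconnected. -/
def ArticulationVertex (G : Multigraph V E) (F : Set E) (v : V) : Prop :=
  ∃ a b : V, a ≠ v ∧ b ≠ v ∧ ¬ G.Reach F {v}ᶜ a b

/-- The subgraph on the edge set `E1`, augmented by one new edge `{u, w}`. -/
def augment (G : Multigraph V E) (E1 : Set E) (u w : V) :
    Multigraph V (↥E1 ⊕ Unit) :=
  ⟨Sum.elim (fun e => G.ends e.1) (fun _ => s(u, w))⟩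

/-- The edge set `Q` of the intersection of the fundamental paths of all
edges in `Y`. -/
def Qedges (G : Multigraph V E) (T Y : Set E) : Set E :=
  ⋂ y ∈ Y, G.fundPath T y

end Multigraph

namespace Multigraph

variable {V E : Type}

/-- Reachability in the augmented part graph (avoiding `v ∈ {u,w}`) implies
reachability in `G`. -/
lemma reach_augment_le (G : Multigraph V E) (Ei : Set E) (u w v : V)
    (hv : v = u ∨ v = w) (Y : Set E) :
    ∀ a b, (G.augment Ei u w).Reach
        (Set.univ \ (Sum.inl '' {e : ↥Ei | (e : E) ∈ Y})) {v}ᶜ a b →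
      G.Reach (Set.univ \ Y) {v}ᶜ a b := by
  intro a b h
  induction h with
  | refl => exact Relation.ReflTransGen.refl
  | tail _ hadj ih =>
    refine ih.tail ?_
    obtain ⟨ha, hb, e', he', hends⟩ := hadj
    cases e' with
    | inl e =>
      refine ⟨ha, hb, e.1, ⟨trivial, fun hy => he'.2 ⟨e, hy, rfl⟩⟩, hends⟩
    | inr _ =>
      exfalso
      have hends' : s(u, w) = s(_, _) := hends
      rcases Sym2.eq_iff.mp hends' with ⟨h1, h2⟩ | ⟨h1, h2⟩ <;>
        rcases hv with rfl | rfl <;> simp_all [Set.mem_compl_singleton_iff]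

/-- Forward direction: restriction of a splitting colouring. -/
lemma splittable_restrict (G : Multigraph V E) (Ei : Set E) (u w v : V)
    (hv : v = u ∨ v = w) (Y : Set E) (h : G.Splittable Y v) :
    (G.augment Ei u w).Splittable
      (Sum.inl '' {e : ↥Ei | (e : E) ∈ Y} : Set (↥Ei ⊕ Unit)) v := by
  obtain ⟨c, hc1, hc2⟩ := h
  refine ⟨c, fun a b hr => hc1 a b (reach_augment_le G Ei u w v hv Y a b hr), ?_⟩
  rintro y' ⟨e, he, rfl⟩ a b hends ha hb
  exact hc2 e he a b hends ha hb

/-- Extract, from splittability of the augmented part graph, a colouring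
with one-step constancy and properness stated purely in terms of `G`. -/
lemma part_props (G : Multigraph V E) (Ei : Set E) (u w v : V) (Y : Set E)
    (h : (G.augment Ei u w).Splittable
      (Sum.inl '' {e : ↥Ei | (e : E) ∈ Y} : Set (↥Ei ⊕ Unit)) v) :
    ∃ c : V → Bool,
      (∀ x y : V, x ≠ v → y ≠ v → ∀ e ∈ Ei, e ∉ Y →
        G.ends e = s(x, y) → c x = c y) ∧
      (∀ y ∈ Y, y ∈ Ei → ∀ a b : V, G.ends y = s(a, b) →
        a ≠ v → b ≠ v → c a ≠ c b) := by
  obtain ⟨c, hc1, hc2⟩ := h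
  refine ⟨c, ?_, ?_⟩
  · intro x y hx hy e heE heY hends
    refine hc1 x y (Relation.ReflTransGen.single ?_)
    refine ⟨Set.mem_compl_singleton_iff.mpr hx,
      Set.mem_compl_singleton_iff.mpr hy, Sum.inl ⟨e, heE⟩, ⟨trivial, ?_⟩, hends⟩
    rintro ⟨e', he', heq⟩
    have : (e' : Ei) = ⟨e, heE⟩ := Sum.inl.inj heq
    subst this
    exact heY he'
  · intro y hyY hyE a b hends ha hb
    exact hc2 (Sum.inl ⟨y, hyE⟩) ⟨⟨y, hyE⟩, hyY, rfl⟩ a b hends ha hb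

/-- Backward direction: combine colourings of the two parts. -/
lemma splittable_combine' (G : Multigraph V E) (E1 E2 : Set E) (v w' : V)
    (hU : E1 ∪ E2 = Set.univ)
    (hI : G.verts E1 ∩ G.verts E2 ⊆ {v, w'})
    (Y : Set E) (c1 c2 : V → Bool)
    (P1 : ∀ x y : V, x ≠ v → y ≠ v → ∀ e ∈ E1, e ∉ Y →
        G.ends e = s(x, y) → c1 x = c1 y)
    (Q1 : ∀ y ∈ Y, y ∈ E1 → ∀ a b : V, G.ends y = s(a, b) →
        a ≠ v → b ≠ v → c1 a ≠ c1 b)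
    (P2 : ∀ x y : V, x ≠ v → y ≠ v → ∀ e ∈ E2, e ∉ Y →
        G.ends e = s(x, y) → c2 x = c2 y)
    (Q2 : ∀ y ∈ Y, y ∈ E2 → ∀ a b : V, G.ends y = s(a, b) →
        a ≠ v → b ≠ v → c2 a ≠ c2 b) :
    G.Splittable Y v := by
  classical
  set δ : Bool := xor (c2 w') (c1 w') with hδ
  set c : V → Bool := fun x => if x ∈ G.verts E1 then c1 x else xor (c2 x) δ
    with hc
  have key1 : ∀ a : V, a ∈ G.verts E1 → c a = c1 a := by
    intro a ha; simp [hc, ha]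
  have key2 : ∀ a : V, a ∈ G.verts E2 → a ≠ v → c a = xor (c2 a) δ := by
    intro a ha2 hav
    by_cases ha1 : a ∈ G.verts E1
    · have : a ∈ ({v, w'} : Set V) := hI ⟨ha1, ha2⟩
      rcases this with rfl | rfl
      · exact absurd rfl hav
      · rw [key1 _ ha1, hδ]
        cases c1 a <;> cases c2 a <;> rfl
    · simp [hc, ha1]
  have memverts : ∀ (F : Set E) (e : E) (x y : V), e ∈ F →
      G.ends e = s(x, y) → x ∈ G.verts F ∧ y ∈ G.verts F := by
    intro F e x y he hends
    exact ⟨⟨e, he, by rw [hends]; exact Sym2.mem_mk_left x y⟩,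
      ⟨e, he, by rw [hends]; exact Sym2.mem_mk_right x y⟩⟩
  refine ⟨c, ?_, ?_⟩
  · intro a b hr
    induction hr with
    | refl => rfl
    | tail _ hadj ih =>
      obtain ⟨hx, hy, e, he, hends⟩ := hadj
      rename_i x y _
      have hxv : x ≠ v := Set.mem_compl_singleton_iff.mp hx
      have hyv : y ≠ v := Set.mem_compl_singleton_iff.mp hy
      have heE : e ∈ E1 ∪ E2 := by rw [hU]; trivial
      rw [ih]
      rcases heE with heE | heE
      · obtain ⟨hx1, hy1⟩ := memverts E1 e x y heE hends
        rw [key1 _ hx1, key1 _ hy1]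
        exact P1 x y hxv hyv e heE he.2 hends
      · obtain ⟨hx2, hy2⟩ := memverts E2 e x y heE hends
        rw [key2 _ hx2 hxv, key2 _ hy2 hyv,
          P2 x y hxv hyv e heE he.2 hends]
  · intro y hyY a b hends ha hb
    have hyE : y ∈ E1 ∪ E2 := by rw [hU]; trivial
    rcases hyE with hyE | hyE
    · obtain ⟨ha1, hb1⟩ := memverts E1 y a b hyE hends
      rw [key1 _ ha1, key1 _ hb1]
      exact Q1 y hyY hyE a b hends ha hb
    · obtain ⟨ha2, hb2⟩ := memverts E2 y a b hyE hends
      rw [key2 _ ha2 ha, key2 _ hb2 hb]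
      have := Q2 y hyY hyE a b hends ha hb
      cases hc2a : c2 a <;> cases hc2b : c2 b <;> cases δ <;> simp_all

end Multigraph

/-- Splittability of a separating vertex of a 2-separation decomposes:
`v ∈ {u, w}` is `Y`-splittable in `G` iff `v` is `Y ∩ Eᵢ`-splittable in each
graph `Gᵢ` obtained from `Eᵢ` by adding a new edge `{u, w}`. -/
theorem shared_splittable_combine {V E : Type} [Fintype V] [Fintype E]
    (G : Multigraph V E) (h2 : G.TutteConnected 2)
    (E1 E2 : Set E) (u w : V) (hsep : G.IsTwoSep E1 E2 u w)
    (T : Set E) (hT : G.IsSpanningTree T)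
    (Y : Set E) (hYT : ∀ y ∈ Y, y ∉ T)
    (v : V) (hv : v = u ∨ v = w) :
    G.Splittable Y v ↔
      ((G.augment E1 u w).Splittable
          (Sum.inl '' {e : ↥E1 | (e : E) ∈ Y} : Set (↥E1 ⊕ Unit)) v ∧
       (G.augment E2 u w).Splittable
          (Sum.inl '' {e : ↥E2 | (e : E) ∈ Y} : Set (↥E2 ⊕ Unit)) v) := by
  obtain ⟨hU, hdisj, h1c, h2c, huw, hI⟩ := hsep
  constructor
  · intro h
    exact ⟨Multigraph.splittable_restrict G E1 u w v hv Y h,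
      Multigraph.splittable_restrict G E2 u w v hv Y h⟩
  · rintro ⟨h1, h2⟩
    obtain ⟨c1, P1, Q1⟩ := Multigraph.part_props G E1 u w v Y h1
    obtain ⟨c2, P2, Q2⟩ := Multigraph.part_props G E2 u w v Y h2
    rcases hv with rfl | rfl
    · exact Multigraph.splittable_combine' G E1 E2 v w hU (hI.le) Y c1 c2
        P1 Q1 P2 Q2
    · refine Multigraph.splittable_combine' G E1 E2 v u hU ?_ Y c1 c2
        P1 Q1 P2 Q2
      rw [hI, Set.pair_comm]
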